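/- (Noisy unfolding of higher-order differences, generic form) Let λ > 0, L ∈ ℕ with L ≥ 1, and let a, ε : ℤ → ℝ be sequences such that sup_{k ∈ ℤ}|(Δ^L a)[k]| + 2^L · sup_{k ∈ ℤ}|ε[k]| < λ. Then the noisy modulo samples q[k] = 𝓜_λ(a[k]) + ε[k] determine the L-th differences of the noisy unfolded samples exactly: 𝓜_λ((Δ^L q)[k]) = (Δ^L (a + ε))[k] for all k ∈ ℤ. -/

import Mathlib

/-- The centered modulo map `𝓜_λ(r) = 2λ(⟦r/(2λ) + 1/2⟧ − 1/2)`. -/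
noncomputable def centeredModulo (lam r : ℝ) : ℝ :=
  2 * lam * (Int.fract (r / (2 * lam) + 1 / 2) - 1 / 2)

/-- First-order finite difference: `(Δa)[k] = a[k+1] − a[k]`. -/
def fdiff (a : ℤ → ℝ) : ℤ → ℝ := fun k => a (k + 1) - a k

/-- Integer-valued finite difference. -/
def fdiffZ (a : ℤ → ℤ) : ℤ → ℤ := fun k => a (k + 1) - a k

lemma centeredModulo_eq (lam r : ℝ) (hlam : 0 < lam) :
    centeredModulo lam r = r - 2 * lam * ⌊r / (2 * lam) + 1 / 2⌋ := by
  unfold centeredModulo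
  rw [Int.fract]
  have h2 : (2 : ℝ) * lam ≠ 0 := by positivity
  field_simp
  ring

lemma centeredModulo_add_int (lam r : ℝ) (hlam : 0 < lam) (n : ℤ) :
    centeredModulo lam (r + 2 * lam * n) = centeredModulo lam r := by
  unfold centeredModulo
  have h2 : (2 : ℝ) * lam ≠ 0 := by positivity
  have h : (r + 2 * lam * n) / (2 * lam) + 1 / 2 = (r / (2 * lam) + 1 / 2) + n := by
    field_simp
    ring
  rw [h, Int.fract_add_intCast]

lemma centeredModulo_self (lam r : ℝ) (hlam : 0 < lam) (h : |r| < lam) :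
    centeredModulo lam r = r := by
  have h2 : (0 : ℝ) < 2 * lam := by positivity
  obtain ⟨h1, h3⟩ := abs_lt.mp h
  have hx0 : 0 ≤ r / (2 * lam) + 1 / 2 := by
    have : -(1 / 2 : ℝ) ≤ r / (2 * lam) := by
      rw [le_div_iff₀ h2]; nlinarith
    linarith
  have hx1 : r / (2 * lam) + 1 / 2 < 1 := by
    have : r / (2 * lam) < 1 / 2 := by
      rw [div_lt_iff₀ h2]; nlinarith
    linarith
  unfold centeredModulo
  rw [Int.fract_eq_self.mpr ⟨hx0, hx1⟩]
  field_simp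
  ring

lemma fdiff_iter_add (L : ℕ) (f g : ℤ → ℝ) :
    fdiff^[L] (fun j => f j + g j) = fun k => fdiff^[L] f k + fdiff^[L] g k := by
  induction L with
  | zero => rfl
  | succ n ih =>
    simp only [Function.iterate_succ_apply', ih]
    funext k
    simp only [fdiff]
    ring

lemma fdiff_iter_cast (L : ℕ) (c : ℝ) (m : ℤ → ℤ) :
    fdiff^[L] (fun j => c * (m j : ℝ)) = fun k => c * ((fdiffZ^[L] m k : ℤ) : ℝ) := by
  induction L with
  | zero => rfl
  | succ n ih =>
    simp only [Function.iterate_succ_apply', ih]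
    funext k
    simp only [fdiff, fdiffZ]
    push_cast
    ring

lemma fdiff_iter_bound (L : ℕ) (f : ℤ → ℝ) (C : ℝ) (hC : ∀ k, |f k| ≤ C) :
    ∀ k, |fdiff^[L] f k| ≤ 2 ^ L * C := by
  induction L with
  | zero => intro k; simpa using hC k
  | succ n ih =>
    intro k
    rw [Function.iterate_succ_apply']
    calc |fdiff (fdiff^[n] f) k| = |fdiff^[n] f (k + 1) - fdiff^[n] f k| := rfl
      _ ≤ |fdiff^[n] f (k + 1)| + |fdiff^[n] f k| := abs_sub _ _
      _ ≤ 2 ^ n * C + 2 ^ n * C := add_le_add (ih (k + 1)) (ih k)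
      _ = 2 ^ (n + 1) * C := by ring

/-- Noisy unfolding of higher-order differences, generic form. -/
theorem noisy_unfolding_generic (lam : ℝ) (hlam : 0 < lam)
    (L : ℕ) (hL : 1 ≤ L) (a ε : ℤ → ℝ)
    (hbddA : BddAbove (Set.range fun k : ℤ => |fdiff^[L] a k|))
    (hbddE : BddAbove (Set.range fun k : ℤ => |ε k|))
    (hsum : (⨆ k : ℤ, |fdiff^[L] a k|) + 2 ^ L * (⨆ k : ℤ, |ε k|) < lam) :
    ∀ k : ℤ, centeredModulo lam
        (fdiff^[L] (fun j : ℤ => centeredModulo lam (a j) + ε j) k) =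
      fdiff^[L] (fun j : ℤ => a j + ε j) k := by
  intro k
  set m : ℤ → ℤ := fun j => ⌊a j / (2 * lam) + 1 / 2⌋ with hm
  have hq : (fun j : ℤ => centeredModulo lam (a j) + ε j)
      = fun j : ℤ => (a j + ε j) + (-(2 * lam)) * ((m j : ℤ) : ℝ) := by
    funext j
    rw [centeredModulo_eq lam (a j) hlam]
    simp [hm]
    ring
  rw [hq]
  have h1 := congrFun (fdiff_iter_add L (fun j : ℤ => a j + ε j)
      (fun j : ℤ => (-(2 * lam)) * ((m j : ℤ) : ℝ))) k
  have h2 := congrFun (fdiff_iter_cast L (-(2 * lam)) m) k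
  rw [h1, h2]
  set r := fdiff^[L] (fun j : ℤ => a j + ε j) k with hr
  set N := fdiffZ^[L] m k with hN
  have hper : r + -(2 * lam) * (N : ℝ) = r + 2 * lam * ((-N : ℤ) : ℝ) := by
    push_cast; ring
  rw [hper, centeredModulo_add_int lam r hlam (-N)]
  -- now show |r| < lam
  have hEk : ∀ j : ℤ, |ε j| ≤ ⨆ i : ℤ, |ε i| := fun j => le_ciSup hbddE j
  have hE : ∀ j : ℤ, |fdiff^[L] ε j| ≤ 2 ^ L * ⨆ i : ℤ, |ε i| :=
    fdiff_iter_bound L ε _ hEk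
  have hA : |fdiff^[L] a k| ≤ ⨆ i : ℤ, |fdiff^[L] a i| := le_ciSup hbddA k
  have hrsplit : r = fdiff^[L] a k + fdiff^[L] ε k := by
    rw [hr]
    have := congrFun (fdiff_iter_add L a ε) k
    simpa using this
  have hbr : |r| < lam := by
    rw [hrsplit]
    calc |fdiff^[L] a k + fdiff^[L] ε k| ≤ |fdiff^[L] a k| + |fdiff^[L] ε k| := abs_add_le _ _
      _ ≤ (⨆ i : ℤ, |fdiff^[L] a i|) + 2 ^ L * ⨆ i : ℤ, |ε i| := add_le_add hA (hE k)
      _ < lam := hsum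
  exact centeredModulo_self lam r hlam hbr
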